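/- Let (e₁, e₂) be pointwise orthonormal W^{1,2} (or smooth) maps from an open set Ω ⊆ ℝ² to ℝⁿ, and let ω = ⟨de₁, e₂⟩ be the connection 1-form. Then |∇e₁|² + |∇e₂|² = 2|ω|² + |∇(e₁∧e₂)|², where e₁∧e₂ : Ω → Λ²(ℝⁿ). -/

import Mathlib

open scoped RealInnerProductSpace

/-- The inner product on Λ²(ℝⁿ) of two simple wedges. -/
noncomputable def wedgeInner {n : ℕ} (v₁ v₂ w₁ w₂ : EuclideanSpace ℝ (Fin n)) : ℝ :=
  ⟪v₁, w₁⟫ * ⟪v₂, w₂⟫ - ⟪v₁, w₂⟫ * ⟪v₂, w₁⟫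

/-- The squared norm in Λ²(ℝⁿ) of `a∧b + c∧d`, expanded by bilinearity. -/
noncomputable def wedgeSumNormSq {n : ℕ} (a b c d : EuclideanSpace ℝ (Fin n)) : ℝ :=
  wedgeInner a b a b + 2 * wedgeInner a b c d + wedgeInner c d c d

theorem key_deriv {n : ℕ} {Ω : Set (ℝ × ℝ)} (hΩ : IsOpen Ω)
    {f g : ℝ × ℝ → EuclideanSpace ℝ (Fin n)} {x : ℝ × ℝ} (hx : x ∈ Ω) {c : ℝ}
    (hc : ∀ y ∈ Ω, ⟪f y, g y⟫ = c) (hf : DifferentiableAt ℝ f x)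
    (hg : DifferentiableAt ℝ g x) (v : ℝ × ℝ) :
    ⟪f x, fderiv ℝ g x v⟫ + ⟪fderiv ℝ f x v, g x⟫ = 0 := by
  have h0 : fderiv ℝ (fun y => ⟪f y, g y⟫) x = 0 := by
    have he : (fun y => ⟪f y, g y⟫) =ᶠ[nhds x] (fun _ => c) :=
      Filter.eventuallyEq_of_mem (hΩ.mem_nhds hx) hc
    rw [he.fderiv_eq, fderiv_fun_const]; rfl
  have := fderiv_inner_apply (𝕜 := ℝ) hf hg v
  rw [h0] at this
  simpa using this.symm

/-- For a pointwise orthonormal pair `(e₁, e₂)` with connection 1-form `ω = ⟨de₁, e₂⟩`,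
`|∇e₁|² + |∇e₂|² = 2|ω|² + |∇(e₁∧e₂)|²`, where
`∂ᵢ(e₁∧e₂) = ∂ᵢe₁ ∧ e₂ + e₁ ∧ ∂ᵢe₂` is measured in the Λ²(ℝⁿ) inner product. -/
theorem stmt_17 {n : ℕ} (Ω : Set (ℝ × ℝ)) (hΩ : IsOpen Ω)
    (e₁ e₂ : ℝ × ℝ → EuclideanSpace ℝ (Fin n))
    (he₁ : ∀ x ∈ Ω, DifferentiableAt ℝ e₁ x)
    (he₂ : ∀ x ∈ Ω, DifferentiableAt ℝ e₂ x)
    (horth : ∀ x ∈ Ω, ⟪e₁ x, e₁ x⟫ = 1 ∧ ⟪e₂ x, e₂ x⟫ = 1 ∧ ⟪e₁ x, e₂ x⟫ = 0) :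
    ∀ x ∈ Ω,
      (‖fderiv ℝ e₁ x (1, 0)‖ ^ 2 + ‖fderiv ℝ e₁ x (0, 1)‖ ^ 2)
          + (‖fderiv ℝ e₂ x (1, 0)‖ ^ 2 + ‖fderiv ℝ e₂ x (0, 1)‖ ^ 2)
        = 2 * (⟪fderiv ℝ e₁ x (1, 0), e₂ x⟫ ^ 2 + ⟪fderiv ℝ e₁ x (0, 1), e₂ x⟫ ^ 2)
          + (wedgeSumNormSq (fderiv ℝ e₁ x (1, 0)) (e₂ x) (e₁ x) (fderiv ℝ e₂ x (1, 0))
              + wedgeSumNormSq (fderiv ℝ e₁ x (0, 1)) (e₂ x) (e₁ x) (fderiv ℝ e₂ x (0, 1))) := by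
  intro x hx
  obtain ⟨h11, h22, h12⟩ := horth x hx
  have hd1 := he₁ x hx
  have hd2 := he₂ x hx
  have H11 : ∀ v, ⟪e₁ x, fderiv ℝ e₁ x v⟫ + ⟪fderiv ℝ e₁ x v, e₁ x⟫ = 0 := fun v =>
    key_deriv hΩ hx (fun y hy => (horth y hy).1) hd1 hd1 v
  have H22 : ∀ v, ⟪e₂ x, fderiv ℝ e₂ x v⟫ + ⟪fderiv ℝ e₂ x v, e₂ x⟫ = 0 := fun v =>
    key_deriv hΩ hx (fun y hy => (horth y hy).2.1) hd2 hd2 v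
  have H12 : ∀ v, ⟪e₁ x, fderiv ℝ e₂ x v⟫ + ⟪fderiv ℝ e₁ x v, e₂ x⟫ = 0 := fun v =>
    key_deriv hΩ hx (fun y hy => (horth y hy).2.2) hd1 hd2 v
  have ha : ∀ v, ⟪fderiv ℝ e₁ x v, e₁ x⟫ = 0 := fun v => by
    have h := H11 v
    have hc := real_inner_comm (e₁ x) (fderiv ℝ e₁ x v)
    linarith
  have hd : ∀ v, ⟪e₂ x, fderiv ℝ e₂ x v⟫ = 0 := fun v => by
    have h := H22 v
    have hc := real_inner_comm (e₂ x) (fderiv ℝ e₂ x v)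
    linarith
  have hm : ∀ v, ⟪e₁ x, fderiv ℝ e₂ x v⟫ = -⟪fderiv ℝ e₁ x v, e₂ x⟫ := fun v => by
    have h := H12 v; linarith
  have hm' : ∀ v, ⟪fderiv ℝ e₂ x v, e₁ x⟫ = -⟪fderiv ℝ e₁ x v, e₂ x⟫ := fun v => by
    rw [real_inner_comm]; exact hm v
  have h21 : ⟪e₂ x, e₁ x⟫ = 0 := by rw [real_inner_comm]; exact h12
  simp only [wedgeSumNormSq, wedgeInner, h11, h22, h12, h21, ha, hd, hm, hm',
    real_inner_comm (e₂ x) (fderiv ℝ e₁ x (1, 0)),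
    real_inner_comm (e₂ x) (fderiv ℝ e₁ x (0, 1)),
    real_inner_self_eq_norm_sq]
  ring
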